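/- Let (B, A, ψ) be a quantum graph with B = ⊕_{a=1}^d M_{n_a}, ψ = ⊕_a Tr(ρ_a ·) a δ-form with ρ_a diagonal. Define D ∈ M_d by D_{ab} = ⟨ρ_b^{-1}, A(ρ_a^{-1})⟩_ψ. Then all entries of (1/δ²) D are non-negative integers. -/

import Mathlib

open scoped TensorProduct ComplexOrder
open Matrix

/-- The multimatrix algebra `B = ⊕_{a=1}^d M_{n_a}` over `ℂ`. -/
abbrev MB (d : ℕ) (n : Fin d → ℕ) := ∀ a : Fin d, Matrix (Fin (n a)) (Fin (n a)) ℂ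

/-- The state `ψ = ⊕_a Tr(ρ_a ·)` as a linear functional. -/
noncomputable def psiL {d : ℕ} {n : Fin d → ℕ} (ρ : MB d n) : MB d n →ₗ[ℂ] ℂ where
  toFun X := ∑ a, (ρ a * X a).trace
  map_add' x y := by simp [mul_add, Finset.sum_add_distrib]
  map_smul' c x := by simp [Finset.mul_sum, mul_smul_comm]

/-- The GNS inner product on `B ⊗ B` paired against the pure tensor `x ⊗ y` in the first
(conjugated) slot. -/
noncomputable def pairL {d : ℕ} {n : Fin d → ℕ} (ρ : MB d n) (x y : MB d n) :
    (MB d n ⊗[ℂ] MB d n) →ₗ[ℂ] ℂ :=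
  TensorProduct.lift
    (LinearMap.mk₂ ℂ (fun c e => psiL ρ (star x * c) * psiL ρ (star y * e))
      (fun c c' e => by simp [mul_add, map_add, add_mul])
      (fun s c e => by simp [mul_smul_comm, _root_.map_smul, smul_eq_mul]; ring)
      (fun c e e' => by simp [mul_add, map_add])
      (fun s c e => by simp [mul_smul_comm, _root_.map_smul, smul_eq_mul]; ring))

namespace Stmt5Aux

variable {d : ℕ} {n : Fin d → ℕ}

noncomputable def EE (a : Fin d) (i j : Fin (n a)) : MB d n :=
  Pi.single a (Matrix.single i j 1)

lemma single_mul_same (a : Fin d) (M N : Matrix (Fin (n a)) (Fin (n a)) ℂ) :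
    (Pi.single a M : MB d n) * Pi.single a N = Pi.single a (M * N) := by
  funext b
  rcases eq_or_ne b a with rfl | h
  · simp [Pi.mul_apply]
  · simp [Pi.mul_apply, Pi.single_eq_of_ne h]

lemma single_mul_ne {a a' : Fin d} (h : a ≠ a') (M : Matrix (Fin (n a)) (Fin (n a)) ℂ)
    (M' : Matrix (Fin (n a')) (Fin (n a')) ℂ) :
    (Pi.single a M : MB d n) * Pi.single a' M' = 0 := by
  funext b
  rcases eq_or_ne b a' with rfl | hb
  · simp [Pi.mul_apply, Pi.single_eq_of_ne (Ne.symm h)]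
  · simp [Pi.mul_apply, Pi.single_eq_of_ne hb]

lemma EE_mul_same (a : Fin d) (i j k l : Fin (n a)) :
    (EE a i j : MB d n) * EE a k l = if j = k then EE a i l else 0 := by
  rw [EE, EE, single_mul_same]
  split_ifs with h
  · subst h; simp [EE]
  · simp [h]

lemma EE_mul_ne {a a' : Fin d} (h : a ≠ a') (i j : Fin (n a)) (i' j' : Fin (n a')) :
    (EE a i j : MB d n) * EE a' i' j' = 0 := single_mul_ne h _ _

lemma star_single (a : Fin d) (M : Matrix (Fin (n a)) (Fin (n a)) ℂ) :
    star (Pi.single a M : MB d n) = Pi.single a Mᴴ := by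
  funext b
  rcases eq_or_ne b a with rfl | h
  · simp [Matrix.star_eq_conjTranspose]
  · simp [Pi.single_eq_of_ne h]

lemma std_conjT {m : ℕ} (i j : Fin m) :
    (Matrix.single i j (1:ℂ))ᴴ = Matrix.single j i 1 := by
  ext k l
  simp [Matrix.single, Matrix.conjTranspose_apply, and_comm]

lemma star_EE (a : Fin d) (i j : Fin (n a)) : star (EE a i j : MB d n) = EE a j i := by
  rw [EE, star_single, std_conjT]; rfl

noncomputable def bB : Module.Basis (Σ a : Fin d, Fin (n a) × Fin (n a)) ℂ (MB d n) :=
  Pi.basis (fun a => Matrix.stdBasis ℂ (Fin (n a)) (Fin (n a)))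

lemma bB_apply (u : Σ a : Fin d, Fin (n a) × Fin (n a)) :
    (bB : Module.Basis _ ℂ (MB d n)) u = EE u.1 u.2.1 u.2.2 := by
  rw [bB, Pi.basis_apply]
  obtain ⟨a, i, j⟩ := u
  rw [Matrix.stdBasis_eq_single]
  rfl

lemma pair_tmul (ρ : MB d n) (x y cc e : MB d n) :
    pairL ρ x y (cc ⊗ₜ[ℂ] e) = psiL ρ (star x * cc) * psiL ρ (star y * e) := rfl

variable (c : ∀ a, Fin (n a) → ℝ) (ρ : MB d n)
    (hρ : ∀ a, ρ a = Matrix.diagonal (fun k => (c a k : ℂ)))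

lemma psi_single (a : Fin d) (M : Matrix (Fin (n a)) (Fin (n a)) ℂ) :
    psiL ρ (Pi.single a M) = (ρ a * M).trace := by
  have h0 : psiL ρ (Pi.single a M) = ∑ a' : Fin d, (ρ a' * (Pi.single a M : MB d n) a').trace := rfl
  rw [h0]
  rw [Finset.sum_eq_single a]
  · simp
  · intro b _ hb; simp [Pi.single_eq_of_ne hb]
  · simp

include hρ

lemma psi_EE (a : Fin d) (i j : Fin (n a)) :
    psiL ρ (EE a i j) = if i = j then (c a i : ℂ) else 0 := by
  rw [EE, psi_single, hρ]
  rcases eq_or_ne i j with rfl | h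
  · simp [Matrix.trace, Matrix.diag, Matrix.diagonal_mul, Matrix.single]
  · rw [if_neg h]
    simp only [Matrix.trace, Matrix.diag, Matrix.diagonal_mul, Matrix.single,
      Matrix.of_apply, mul_ite, mul_one, mul_zero]
    exact Finset.sum_eq_zero (by rintro k -; rw [if_neg]; rintro ⟨rfl, rfl⟩; exact h rfl)

lemma psi_pair (u u' : Σ a : Fin d, Fin (n a) × Fin (n a)) :
    psiL ρ (star (EE u.1 u.2.1 u.2.2) * EE u'.1 u'.2.1 u'.2.2) =
      if u = u' then (c u.1 u.2.2 : ℂ) else 0 := by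
  obtain ⟨a, i, j⟩ := u
  obtain ⟨a', i', j'⟩ := u'
  rw [star_EE]
  rcases eq_or_ne a a' with rfl | h
  · rw [EE_mul_same]
    rcases eq_or_ne i i' with rfl | hi
    · rw [if_pos rfl, psi_EE c ρ hρ]
      rcases eq_or_ne j j' with rfl | hj
      · simp
      · rw [if_neg hj, if_neg (by simp [Sigma.mk.inj_iff, Prod.ext_iff, hj])]
    · rw [if_neg hi, map_zero, if_neg]
      simp [Sigma.mk.inj_iff, Prod.ext_iff, hi]
  · rw [EE_mul_ne h, map_zero, if_neg]
    simp [Sigma.mk.inj_iff, h]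

lemma pairKey (u v : Σ a : Fin d, Fin (n a) × Fin (n a)) (w : MB d n ⊗[ℂ] MB d n) :
    pairL ρ (bB u) (bB v) w =
      ((c u.1 u.2.2 : ℂ) * (c v.1 v.2.2 : ℂ)) * (((bB.tensorProduct bB).repr w) (u, v)) := by
  have key : pairL ρ (bB u) (bB v) =
      ((c u.1 u.2.2 : ℂ) * (c v.1 v.2.2 : ℂ)) • ((bB.tensorProduct bB).coord (u, v)) := by
    apply (bB.tensorProduct bB).ext
    rintro ⟨u', v'⟩
    rw [LinearMap.smul_apply, Module.Basis.coord_apply, Module.Basis.repr_self, smul_eq_mul,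
      Finsupp.single_apply, Module.Basis.tensorProduct_apply', pair_tmul, bB_apply, bB_apply,
      bB_apply, bB_apply, psi_pair c ρ hρ, psi_pair c ρ hρ]
    rcases eq_or_ne u u' with rfl | hu
    · rcases eq_or_ne v v' with rfl | hv
      · simp
      · simp [hv, Ne.symm hv, Prod.ext_iff]
    · simp [hu, Ne.symm hu, Prod.ext_iff]
  rw [key, LinearMap.smul_apply, Module.Basis.coord_apply, smul_eq_mul]

include hρ in
lemma psi_prod (b : Fin d) (x y z w : Fin (n b)) :
    psiL ρ (EE b x y * EE b z w) = if y = z ∧ x = w then (c b x : ℂ) else 0 := by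
  rw [EE_mul_same]
  rcases eq_or_ne y z with h | h
  · rw [if_pos h, psi_EE c ρ hρ]
    rcases eq_or_ne x w with h' | h'
    · rw [if_pos h', if_pos ⟨h, h'⟩]
    · rw [if_neg h', if_neg (by tauto)]
  · rw [if_neg h, map_zero, if_neg (by tauto)]

variable (hc : ∀ a k, 0 < c a k)

include hc

lemma pair_inj (w : MB d n ⊗[ℂ] MB d n) (hw : ∀ x y, pairL ρ x y w = 0) : w = 0 := by
  rw [← (bB.tensorProduct bB).forall_coord_eq_zero_iff]
  rintro ⟨u, v⟩
  rw [Module.Basis.coord_apply]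
  have h := hw (bB u) (bB v)

  rw [pairKey c ρ hρ] at h
  have h1 : ((c u.1 u.2.2 : ℂ) * (c v.1 v.2.2 : ℂ)) ≠ 0 :=
    mul_ne_zero (by exact_mod_cast (hc u.1 u.2.2).ne')
      (by exact_mod_cast (hc v.1 v.2.2).ne')
  exact (mul_eq_zero.mp h).resolve_left h1

include hρ hc in
lemma same_block (b : Fin d) (p q p' q' i j : Fin (n b)) :
    psiL ρ ((EE b p' q' * EE b p q) * EE b i j) =
      ∑ l, ((c b l : ℂ))⁻¹ *
        (psiL ρ (EE b p q * EE b i l) * psiL ρ (EE b p' q' * EE b l j)) := by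
  have lhs : psiL ρ ((EE b p' q' * EE b p q : MB d n) * EE b i j)
      = if q' = p ∧ q = i ∧ p' = j then (c b p' : ℂ) else 0 := by
    rw [EE_mul_same]
    rcases eq_or_ne q' p with h | h
    · rw [if_pos h, psi_prod c ρ hρ]
      by_cases h2 : q = i ∧ p' = j
      · rw [if_pos h2, if_pos ⟨h, h2⟩]
      · rw [if_neg h2, if_neg (by tauto)]
    · rw [if_neg h, zero_mul, map_zero, if_neg (by tauto)]
  rw [lhs]
  simp only [psi_prod c ρ hρ]
  rw [Finset.sum_eq_single p]
  · have hcp : (c b p : ℂ) ≠ 0 := by exact_mod_cast (hc b p).ne'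
    by_cases h2 : q = i <;> by_cases h3 : q' = p <;> by_cases h4 : p' = j <;>
      simp [h2, h3, h4, hcp] <;> field_simp
  · intro l _ hl
    rw [if_neg (fun hh => hl hh.2.symm), zero_mul, mul_zero]
  · intro h; exact absurd (Finset.mem_univ p) h

include hρ hc in
lemma bilinear_claim (a : Fin d) (i j : Fin (n a))
    (b : Fin d) (p q : Fin (n b)) (b' : Fin d) (p' q' : Fin (n b')) :
    psiL ρ ((EE b' p' q' * EE b p q) * EE a i j) =
      ∑ l, ((c a l : ℂ))⁻¹ *
        (psiL ρ (EE b p q * EE a i l) * psiL ρ (EE b' p' q' * EE a l j)) := by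
  rcases eq_or_ne b a with hb | hb
  · rcases eq_or_ne b' b with hb' | hb'
    · subst hb; subst hb'
      exact same_block c ρ hρ hc b' p q p' q' i j
    · subst hb
      rw [EE_mul_ne hb', zero_mul, map_zero]
      symm
      refine Finset.sum_eq_zero fun l _ => ?_
      rw [EE_mul_ne hb', map_zero, mul_zero, mul_zero]
  · rw [mul_assoc, EE_mul_ne hb, mul_zero, map_zero]
    symm
    refine Finset.sum_eq_zero fun l _ => ?_
    rw [EE_mul_ne hb, map_zero, zero_mul, mul_zero]

include hρ hc in
lemma mstar_EE (mstar : MB d n →ₗ[ℂ] MB d n ⊗[ℂ] MB d n)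
    (hmstar : ∀ x y z : MB d n, psiL ρ (star (x * y) * z) = pairL ρ x y (mstar z))
    (a : Fin d) (i j : Fin (n a)) :
    mstar (EE a i j) =
      ∑ l, ((c a l : ℂ))⁻¹ • ((EE a i l : MB d n) ⊗ₜ[ℂ] EE a l j) := by
  have main : ∀ x y : MB d n, pairL ρ x y
      (mstar (EE a i j) - ∑ l, ((c a l : ℂ))⁻¹ • ((EE a i l : MB d n) ⊗ₜ[ℂ] EE a l j)) = 0 := by
    intro x y
    rw [map_sub, ← hmstar]
    rw [sub_eq_zero, map_sum]
    have key : ∀ u v : MB d n, psiL ρ ((v * u) * EE a i j) =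
        ∑ l, ((c a l : ℂ))⁻¹ * (psiL ρ (u * EE a i l) * psiL ρ (v * EE a l j)) := by
      have hL : ∀ u v : MB d n, ∃ L1 L2 : MB d n →ₗ[ℂ] MB d n →ₗ[ℂ] ℂ, True := fun _ _ => ⟨0, 0, trivial⟩
      let L1 : MB d n →ₗ[ℂ] MB d n →ₗ[ℂ] ℂ :=
        LinearMap.mk₂ ℂ (fun u v => psiL ρ ((v * u) * EE a i j))
          (fun u u' v => by rw [mul_add, add_mul, map_add])
          (fun s u v => by rw [mul_smul_comm, smul_mul_assoc, _root_.map_smul, smul_eq_mul])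
          (fun u v v' => by rw [add_mul, add_mul, map_add])
          (fun s u v => by rw [smul_mul_assoc, smul_mul_assoc, _root_.map_smul, smul_eq_mul])
      let L2 : MB d n →ₗ[ℂ] MB d n →ₗ[ℂ] ℂ :=
        LinearMap.mk₂ ℂ
          (fun u v => ∑ l, ((c a l : ℂ))⁻¹ * (psiL ρ (u * EE a i l) * psiL ρ (v * EE a l j)))
          (fun u u' v => by
            rw [← Finset.sum_add_distrib]
            refine Finset.sum_congr rfl fun l _ => ?_
            rw [add_mul, map_add, add_mul, mul_add])
          (fun s u v => by
            rw [Finset.smul_sum]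
            refine Finset.sum_congr rfl fun l _ => ?_
            rw [smul_mul_assoc, _root_.map_smul, smul_eq_mul, smul_eq_mul]; ring)
          (fun u v v' => by
            rw [← Finset.sum_add_distrib]
            refine Finset.sum_congr rfl fun l _ => ?_
            rw [add_mul, map_add, mul_add, mul_add])
          (fun s u v => by
            rw [Finset.smul_sum]
            refine Finset.sum_congr rfl fun l _ => ?_
            rw [smul_mul_assoc, _root_.map_smul, smul_eq_mul, smul_eq_mul]; ring)
      have hL12 : L1 = L2 := by
        apply bB.ext
        intro u
        apply bB.ext
        intro v
        show psiL ρ ((bB v * bB u) * EE a i j) = ∑ l, ((c a l : ℂ))⁻¹ *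
          (psiL ρ (bB u * EE a i l) * psiL ρ (bB v * EE a l j))
        rw [bB_apply, bB_apply]
        exact bilinear_claim c ρ hρ hc a i j u.1 u.2.1 u.2.2 v.1 v.2.1 v.2.2
      intro u v
      exact DFunLike.congr_fun (DFunLike.congr_fun hL12 u) v
    have hx := key (star x) (star y)
    rw [← StarMul.star_mul] at hx
    simp_rw [_root_.map_smul, pair_tmul, smul_eq_mul]
    exact hx
  have := pair_inj c ρ hρ hc _ main
  rw [sub_eq_zero] at this
  exact this

omit hρ hc in
lemma trace_nat_of_idem {ι : Type*} [Fintype ι] [DecidableEq ι] (P : Matrix ι ι ℂ)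
    (h : P * P = P) : ∃ k : ℕ, P.trace = (k : ℂ) := by
  have h2 : Matrix.toLin' P ∘ₗ Matrix.toLin' P = Matrix.toLin' P := by
    rw [← Matrix.toLin'_mul, h]
  obtain ⟨p, hp⟩ := (LinearMap.isProj_iff_isIdempotentElem _).mpr h2
  refine ⟨Module.finrank ℂ p, ?_⟩
  have htr := hp.trace
  rw [LinearMap.trace_eq_matrix_trace ℂ (Pi.basisFun ℂ ι), LinearMap.toMatrix_eq_toMatrix',
    LinearMap.toMatrix'_toLin'] at htr
  exact htr

end Stmt5Aux

open Stmt5Aux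

/-- let `(B, A, ψ)` be a quantum graph with `B = ⊕_a M_{n_a}` and
`ψ = ⊕_a Tr(ρ_a ·)` a `δ`-form with each `ρ_a` diagonal.  Define the matrix `D ∈ M_d` by
`D_{ab} = ⟨ρ_b⁻¹, A(ρ_a⁻¹)⟩_ψ` (with `⟨x,y⟩_ψ = ψ(x*y)`, and `ρ_a⁻¹` viewed inside the
`a`-th block).  Then all entries of `(1/δ²) D` are non-negative integers. -/
theorem stmt5 {d : ℕ} {n : Fin d → ℕ} (c : ∀ a, Fin (n a) → ℝ)
    (hc : ∀ a k, 0 < c a k)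
    (ρ : MB d n) (hρ : ∀ a, ρ a = Matrix.diagonal (fun k => (c a k : ℂ)))
    (δ : ℝ) (hδ : 0 < δ)
    (mstar : MB d n →ₗ[ℂ] MB d n ⊗[ℂ] MB d n)
    (hmstar : ∀ x y z : MB d n,
      psiL ρ (star (x * y) * z) = pairL ρ x y (mstar z))
    (hform : ∀ z : MB d n, LinearMap.mul' ℂ (MB d n) (mstar z) = (δ ^ 2 : ℂ) • z)
    (A : MB d n →ₗ[ℂ] MB d n)
    (hAstar : ∀ x, A (star x) = star (A x))
    (hSchur : ∀ z : MB d n,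
      LinearMap.mul' ℂ (MB d n) (TensorProduct.map A A (mstar z)) = (δ ^ 2 : ℂ) • A z) :
    ∀ a b : Fin d, ∃ k : ℕ,
      psiL ρ (star (Pi.single b ((ρ b)⁻¹)) * A (Pi.single a ((ρ a)⁻¹))) =
        (δ ^ 2 : ℂ) * k := by
  intro a b
  classical
  have hδ2 : ((δ : ℂ) ^ 2) ≠ 0 := pow_ne_zero _ (by exact_mod_cast hδ.ne')
  have hcne : ∀ (a' : Fin d) (k : Fin (n a')), (c a' k : ℂ) ≠ 0 := fun a' k => by
    exact_mod_cast (hc a' k).ne'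
  -- key Schur identity on basis elements
  have keyid : ∀ i j : Fin (n a),
      ∑ l, ((c a l : ℂ))⁻¹ • (A (EE a i l) * A (EE a l j)) = ((δ : ℂ) ^ 2) • A (EE a i j) := by
    intro i j
    have h1 := hSchur (EE a i j)
    rw [mstar_EE c ρ hρ hc mstar hmstar a i j, map_sum, map_sum] at h1
    simp_rw [_root_.map_smul, TensorProduct.map_tmul, LinearMap.mul'_apply] at h1
    exact h1
  set Y : ∀ _ : Fin (n a), ∀ _ : Fin (n a), Matrix (Fin (n b)) (Fin (n b)) ℂ :=
    fun i j => (A (EE a i j)) b with hY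
  have keyb : ∀ (i j : Fin (n a)) (k l' : Fin (n b)),
      ∑ j0, ((c a j0 : ℂ))⁻¹ * (Y i j0 * Y j0 j) k l' = ((δ : ℂ) ^ 2) * (Y i j) k l' := by
    intro i j k l'
    have h2 := congrFun (keyid i j) b
    rw [Finset.sum_apply] at h2
    have h3 := congrFun (congrFun h2 k) l'
    simpa [Matrix.sum_apply, Matrix.smul_apply, smul_eq_mul, Pi.smul_apply, Pi.mul_apply,
      Finset.sum_apply, hY, Matrix.mul_apply] using h3
  set P : Matrix (Fin (n a) × Fin (n b)) (Fin (n a) × Fin (n b)) ℂ :=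
    Matrix.of (fun x y => (((δ : ℂ) ^ 2))⁻¹ * ((c a y.1 : ℂ))⁻¹ * (Y x.1 y.1) x.2 y.2) with hP
  have hPP : P * P = P := by
    ext ⟨i, k⟩ ⟨j, l'⟩
    rw [Matrix.mul_apply, Fintype.sum_prod_type]
    have expand : ∀ j0 : Fin (n a),
        ∑ l0, P (i, k) (j0, l0) * P (j0, l0) (j, l') =
          (((δ : ℂ) ^ 2))⁻¹ * (((δ : ℂ) ^ 2))⁻¹ * ((c a j : ℂ))⁻¹ *
            (((c a j0 : ℂ))⁻¹ * ((Y i j0 * Y j0 j) k l')) := by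
      intro j0
      simp only [Matrix.mul_apply, Finset.mul_sum]
      refine Finset.sum_congr rfl fun l0 _ => ?_
      simp only [hP, Matrix.of_apply]
      ring
    rw [Finset.sum_congr rfl fun j0 _ => expand j0, ← Finset.mul_sum, keyb i j k l']
    simp only [hP, Matrix.of_apply]
    linear_combination (((δ : ℂ) ^ 2)⁻¹ * ((c a j : ℂ))⁻¹ * Y i j k l') *
      (inv_mul_cancel₀ hδ2)
  obtain ⟨k, hk⟩ := trace_nat_of_idem P hPP
  refine ⟨k, ?_⟩
  -- inverse of ρ is diagonal of inverses
  have hmulone : ∀ a', ρ a' * Matrix.diagonal (fun k => ((c a' k : ℂ))⁻¹) = 1 := by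
    intro a'
    rw [hρ a', Matrix.diagonal_mul_diagonal]
    have h1 : (fun k => (c a' k : ℂ) * ((c a' k : ℂ))⁻¹) = fun _ => 1 :=
      funext fun k => mul_inv_cancel₀ (hcne a' k)
    rw [h1, Matrix.diagonal_one]
  have hinv : ∀ a', (ρ a')⁻¹ = Matrix.diagonal (fun k => ((c a' k : ℂ))⁻¹) :=
    fun a' => Matrix.inv_eq_right_inv (hmulone a')
  -- star of the test element
  have hstar : star (Pi.single b ((ρ b)⁻¹) : MB d n) = Pi.single b ((ρ b)⁻¹) := by
    rw [star_single, hinv b, Matrix.diagonal_conjTranspose,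
      show (star fun k => ((c b k : ℂ))⁻¹) = fun k => ((c b k : ℂ))⁻¹ from
        funext fun k => by simp [← Complex.ofReal_inv, Complex.conj_ofReal]]
  -- ψ(single b (ρ b)⁻¹ * X) = trace of block b of X
  have hmulpsi : ∀ X : MB d n,
      psiL ρ (Pi.single b ((ρ b)⁻¹) * X) = (X b).trace := by
    intro X
    have hsX : (Pi.single b ((ρ b)⁻¹) : MB d n) * X = Pi.single b ((ρ b)⁻¹ * X b) := by
      funext b'
      rcases eq_or_ne b' b with rfl | hb'
      · simp [Pi.mul_apply]
      · simp [Pi.mul_apply, Pi.single_eq_of_ne hb']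
    rw [hsX, psi_single, ← mul_assoc, hinv b, hmulone b, one_mul]
  -- expansion of single a (ρ a)⁻¹ in basis
  have hexp : (Pi.single a ((ρ a)⁻¹) : MB d n) = ∑ i, ((c a i : ℂ))⁻¹ • EE a i i := by
    have hdiag : (ρ a)⁻¹ = ∑ i, ((c a i : ℂ))⁻¹ • Matrix.single i i (1 : ℂ) := by
      rw [hinv a]
      ext k l
      rw [Matrix.sum_apply]
      rcases eq_or_ne k l with rfl | hkl
      · simp [Matrix.single, Matrix.diagonal_apply]
      · simp only [Matrix.diagonal_apply, if_neg hkl, Matrix.smul_apply, Matrix.single,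
          Matrix.of_apply, smul_eq_mul, mul_ite, mul_one, mul_zero]
        refine (Finset.sum_eq_zero fun x _ => ?_).symm
        rw [if_neg]
        rintro ⟨rfl, rfl⟩
        exact hkl rfl
    rw [hdiag]
    have := map_sum (LinearMap.single ℂ (fun a' => Matrix (Fin (n a')) (Fin (n a')) ℂ) a)
      (fun i => ((c a i : ℂ))⁻¹ • Matrix.single i i (1 : ℂ)) Finset.univ
    rw [show (Pi.single a (∑ i, ((c a i : ℂ))⁻¹ • Matrix.single i i (1:ℂ)) : MB d n) =
      LinearMap.single ℂ (fun a' => Matrix (Fin (n a')) (Fin (n a')) ℂ) a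
        (∑ i, ((c a i : ℂ))⁻¹ • Matrix.single i i (1:ℂ)) from rfl, this]
    refine Finset.sum_congr rfl fun i _ => ?_
    rw [_root_.map_smul]
    rfl
  rw [hstar, hmulpsi, hexp, map_sum]
  simp_rw [_root_.map_smul]
  rw [Finset.sum_apply]
  have htr : P.trace = (((δ : ℂ) ^ 2))⁻¹ * ∑ i, ((c a i : ℂ))⁻¹ * (Y i i).trace := by
    simp only [Matrix.trace, Matrix.diag]
    rw [Fintype.sum_prod_type, Finset.mul_sum]
    refine Finset.sum_congr rfl fun i _ => ?_
    simp only [hP, Matrix.of_apply, Finset.mul_sum]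
    refine Finset.sum_congr rfl fun x _ => ?_
    ring
  simp_rw [Pi.smul_apply]
  rw [Matrix.trace_sum]
  simp_rw [Matrix.trace_smul, smul_eq_mul]
  rw [← hk, htr, ← mul_assoc, mul_inv_cancel₀ hδ2, one_mul]
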